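/- If X − Y − Z forms a Markov chain and U is uniform on a finite abelian group G and independent of (X, Y, Z), then with Y' = (Y, U ⊕ X) and Z' = (Z, U ⊕ X), the triple U − Y' − Z' forms a Markov chain, i.e., I(U ; Z' | Y') = 0. -/
import Mathlib


open Finset

/-- The pmf of the random variable `V` on the finite probability space `(Ω, μ)`. -/
noncomputable def pdist {Ω β : Type*} [Fintype Ω] [DecidableEq β]
    (μ : Ω → ℝ) (V : Ω → β) (b : β) : ℝ :=
  ∑ ω, if V ω = b then μ ω else 0

/-- Shannon entropy (base 2) of a pmf, with the convention `0 * log 0 = 0`. -/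
noncomputable def ent2 {α : Type*} [Fintype α] (p : α → ℝ) : ℝ :=
  ∑ x, if p x = 0 then 0 else -(p x * Real.logb 2 (p x))

lemma pdist_comp {Ω β γ : Type*} [Fintype Ω] [Fintype β] [DecidableEq β] [DecidableEq γ]
    (μ : Ω → ℝ) (V : Ω → β) (W : Ω → γ) (f : β → γ) (hf : ∀ ω, W ω = f (V ω)) (c : γ) :
    pdist μ W c = ∑ b, if f b = c then pdist μ V b else 0 := by
  unfold pdist
  rw [Finset.sum_congr rfl fun b (_ : b ∈ Finset.univ) =>
    show (if f b = c then (∑ ω, if V ω = b then μ ω else 0) else 0)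
        = ∑ ω, if f b = c then (if V ω = b then μ ω else 0) else 0 from by
      by_cases h : f b = c <;> simp [h]]
  rw [Finset.sum_comm]
  refine Finset.sum_congr rfl fun ω _ => ?_
  rw [show (∑ b, if f b = c then (if V ω = b then μ ω else 0) else 0)
      = ∑ b, if V ω = b then (if f b = c then μ ω else 0) else 0 from
    Finset.sum_congr rfl fun b _ => by by_cases h1 : f b = c <;> by_cases h2 : V ω = b <;> simp [h1, h2]]
  rw [hf ω]
  simp [Finset.sum_ite_eq]

lemma pdist_sum {Ω β : Type*} [Fintype Ω] [Fintype β] [DecidableEq β]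
    {μ : Ω → ℝ} (h1 : ∑ ω, μ ω = 1) (V : Ω → β) : ∑ b, pdist μ V b = 1 := by
  unfold pdist
  rw [Finset.sum_comm]
  rw [Finset.sum_congr rfl fun ω _ => Finset.sum_ite_eq Finset.univ (V ω) (fun _ => μ ω)]
  simpa using h1

lemma ent2_reindex {α α' : Type*} [Fintype α] [Fintype α'] [DecidableEq α']
    (p : α → ℝ) (p' : α' → ℝ) (f : α → α') (hf : Function.Injective f)
    (h1 : ∀ a, p' (f a) = p a) (h2 : ∀ a', (∀ a, f a ≠ a') → p' a' = 0) :
    ent2 p' = ent2 p := by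
  unfold ent2
  rw [show (∑ x : α', if p' x = 0 then 0 else -(p' x * Real.logb 2 (p' x)))
      = ∑ x ∈ Finset.univ.image f, (if p' x = 0 then 0 else -(p' x * Real.logb 2 (p' x))) from
    (Finset.sum_subset (Finset.subset_univ _) fun x _ hx => by
      have : ∀ a, f a ≠ x := fun a ha => hx (Finset.mem_image.2 ⟨a, Finset.mem_univ a, ha⟩)
      simp [h2 x this]).symm]
  rw [Finset.sum_image (fun a _ b _ h => hf h)]
  exact Finset.sum_congr rfl fun a _ => by rw [h1 a]

lemma ent2_scale {α G : Type*} [Fintype α] [Fintype G] [Nonempty G]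
    (q : α → ℝ) (hq1 : ∑ a, q a = 1) :
    ent2 (fun p : α × G => q p.1 / (Fintype.card G : ℝ))
      = ent2 q + Real.logb 2 (Fintype.card G) := by
  have hn0 : (0:ℝ) < (Fintype.card G : ℝ) := by exact_mod_cast Fintype.card_pos
  unfold ent2
  rw [Fintype.sum_prod_type]
  simp only [Finset.sum_const, Finset.card_univ, nsmul_eq_mul]
  have key : ∀ a, (Fintype.card G : ℝ) *
      (if q a / (Fintype.card G : ℝ) = 0 then 0
        else -(q a / (Fintype.card G : ℝ) * Real.logb 2 (q a / (Fintype.card G : ℝ))))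
      = (if q a = 0 then 0 else -(q a * Real.logb 2 (q a))) + q a * Real.logb 2 (Fintype.card G) := by
    intro a
    by_cases h : q a = 0
    · simp [h]
    · have hne : q a / (Fintype.card G : ℝ) ≠ 0 := div_ne_zero h (ne_of_gt hn0)
      rw [if_neg hne, if_neg h, Real.logb_div h (ne_of_gt hn0)]
      field_simp
      ring
  rw [Finset.sum_congr rfl fun a _ => key a, Finset.sum_add_distrib, ← Finset.sum_mul, hq1]
  ring

lemma sum_sum_ite_eq {β γ M : Type*} [Fintype β] [Fintype γ] [DecidableEq β] [AddCommMonoid M]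
    (y : β) (f : β → γ → M) :
    (∑ b, ∑ c, if b = y then f b c else 0) = ∑ c, f y c := by
  rw [Finset.sum_comm]
  simp

/-- If X − Y − Z is a Markov chain (I(X;Z|Y) = 0) and U is uniform on a finite abelian
group G and independent of (X,Y,Z), then with Y' = (Y, U⊕X) and Z' = (Z, U⊕X),
U − Y' − Z' is a Markov chain, i.e. I(U; Z' | Y') = 0, where
I(A;B|C) = H(A,C) + H(B,C) − H(A,B,C) − H(C). -/
theorem stmt11 {Ω G β γ : Type*} [Fintype Ω] [Fintype G] [DecidableEq G] [AddCommGroup G]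
    [Fintype β] [DecidableEq β] [Fintype γ] [DecidableEq γ]
    (μ : Ω → ℝ) (h0 : ∀ ω, 0 ≤ μ ω) (h1 : ∑ ω, μ ω = 1)
    (U X : Ω → G) (Y : Ω → β) (Z : Ω → γ)
    (hU : ∀ g, pdist μ U g = 1 / (Fintype.card G : ℝ))
    (hind : ∀ g w, pdist μ (fun ω => (U ω, (X ω, Y ω, Z ω))) (g, w)
        = pdist μ U g * pdist μ (fun ω => (X ω, Y ω, Z ω)) w)
    (hMarkov :
      ent2 (pdist μ (fun ω => (X ω, Y ω)))
        + ent2 (pdist μ (fun ω => (Z ω, Y ω)))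
        - ent2 (pdist μ (fun ω => (X ω, Z ω, Y ω)))
        - ent2 (pdist μ Y) = 0) :
    ent2 (pdist μ (fun ω => (U ω, (Y ω, U ω + X ω))))
      + ent2 (pdist μ (fun ω => ((Z ω, U ω + X ω), (Y ω, U ω + X ω))))
      - ent2 (pdist μ (fun ω => (U ω, (Z ω, U ω + X ω), (Y ω, U ω + X ω))))
      - ent2 (pdist μ (fun ω => (Y ω, U ω + X ω))) = 0 := by
  haveI : Nonempty G := ⟨0⟩
  set n : ℝ := (Fintype.card G : ℝ) with hn
  set q : G × β × γ → ℝ := pdist μ (fun ω => (X ω, Y ω, Z ω)) with hqdef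
  have hq : ∀ g w, pdist μ (fun ω => (U ω, (X ω, Y ω, Z ω))) (g, w) = q w / n := by
    intro g w; rw [hind, hU]; ring
  -- marginals
  have m2 : ∀ x y, pdist μ (fun ω => (X ω, Y ω)) (x, y) = ∑ z, q (x, y, z) := by
    intro x y
    rw [pdist_comp μ (fun ω => (X ω, Y ω, Z ω)) _ (fun w => (w.1, w.2.1)) (fun ω => rfl) (x, y)]
    simp [Fintype.sum_prod_type, Prod.ext_iff, ite_and, Finset.sum_ite_eq, Finset.sum_ite_eq', sum_sum_ite_eq, Finset.sum_const_zero, ← hqdef]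
  have m3 : ∀ z y, pdist μ (fun ω => (Z ω, Y ω)) (z, y) = ∑ x, q (x, y, z) := by
    intro z y
    rw [pdist_comp μ (fun ω => (X ω, Y ω, Z ω)) _ (fun w => (w.2.2, w.2.1)) (fun ω => rfl) (z, y)]
    simp [Fintype.sum_prod_type, Prod.ext_iff, ite_and, Finset.sum_ite_eq, Finset.sum_ite_eq', sum_sum_ite_eq, Finset.sum_const_zero, ← hqdef]
  have m4 : ∀ x z y, pdist μ (fun ω => (X ω, Z ω, Y ω)) (x, z, y) = q (x, y, z) := by
    intro x z y
    rw [pdist_comp μ (fun ω => (X ω, Y ω, Z ω)) _ (fun w => (w.1, w.2.2, w.2.1)) (fun ω => rfl) (x, z, y)]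
    simp [Fintype.sum_prod_type, Prod.ext_iff, ite_and, Finset.sum_ite_eq, Finset.sum_ite_eq', sum_sum_ite_eq, Finset.sum_const_zero, ← hqdef]
  have m1 : ∀ y, pdist μ Y y = ∑ x, ∑ z, q (x, y, z) := by
    intro y
    rw [pdist_comp μ (fun ω => (X ω, Y ω, Z ω)) _ (fun w => w.2.1) (fun ω => rfl) y]
    simp [Fintype.sum_prod_type, Finset.sum_ite_eq, Finset.sum_ite_eq', sum_sum_ite_eq, Finset.sum_const_zero, ← hqdef]
  have key1 : ∀ u y s, pdist μ (fun ω => (U ω, (Y ω, U ω + X ω))) (u, (y, s))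
      = pdist μ (fun ω => (X ω, Y ω)) (s - u, y) / n := by
    intro u y s
    rw [pdist_comp μ (fun ω => (U ω, (X ω, Y ω, Z ω))) _
        (fun w => (w.1, (w.2.2.1, w.1 + w.2.1))) (fun ω => rfl) (u, (y, s)), m2]
    simp only [Fintype.sum_prod_type, hq]
    simp [Prod.ext_iff, ite_and, Finset.sum_ite_eq, Finset.sum_ite_eq', sum_sum_ite_eq,
      Finset.sum_div]
    simp only [show ∀ x : G, (u + x = s) = (x = s - u) from
      fun x => propext eq_sub_iff_add_eq'.symm]
    simp [Finset.sum_ite_eq']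
  have key4 : ∀ y s, pdist μ (fun ω => (Y ω, U ω + X ω)) (y, s) = pdist μ Y y / n := by
    intro y s
    rw [pdist_comp μ (fun ω => (U ω, (X ω, Y ω, Z ω))) _
        (fun w => (w.2.2.1, w.1 + w.2.1)) (fun ω => rfl) (y, s), m1]
    simp only [Fintype.sum_prod_type, hq]
    simp [Prod.ext_iff, ite_and, Finset.sum_ite_eq, Finset.sum_ite_eq', sum_sum_ite_eq,
      Finset.sum_div]
    simp only [show ∀ a x : G, (a + x = s) = (x = s - a) from
      fun a x => propext eq_sub_iff_add_eq'.symm]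
    simp only [Finset.sum_ite_eq', Finset.mem_univ, if_true]
    exact Fintype.sum_equiv (Equiv.subLeft s) _ _ (fun a => rfl)
  have key2 : ∀ z s1 y s2, pdist μ (fun ω => ((Z ω, U ω + X ω), (Y ω, U ω + X ω))) ((z,s1),(y,s2))
      = if s1 = s2 then pdist μ (fun ω => (Z ω, Y ω)) (z, y) / n else 0 := by
    intro z s1 y s2
    rw [pdist_comp μ (fun ω => (U ω, (X ω, Y ω, Z ω))) _
        (fun w => ((w.2.2.2, w.1 + w.2.1), (w.2.2.1, w.1 + w.2.1))) (fun ω => rfl) ((z,s1),(y,s2)), m3]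
    simp only [Fintype.sum_prod_type, hq]
    simp [Prod.ext_iff, ite_and, Finset.sum_ite_eq, Finset.sum_ite_eq', sum_sum_ite_eq,
      Finset.sum_div]
    by_cases hs : s1 = s2
    · subst hs
      rw [if_pos rfl]
      simp only [show ∀ a x : G, (a + x = s1) = (x = s1 - a) from
        fun a x => propext eq_sub_iff_add_eq'.symm]
      simp [Finset.sum_ite_eq']
      exact Fintype.sum_equiv (Equiv.subLeft s1) _ _ (fun a => rfl)
    · rw [if_neg hs]
      refine Finset.sum_eq_zero fun a _ => Finset.sum_eq_zero fun x _ => ?_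
      split_ifs with h1 h2
      · exact absurd (h1.symm.trans h2) hs
      · rfl
      · rfl
  have key3 : ∀ u z s1 y s2,
      pdist μ (fun ω => (U ω, (Z ω, U ω + X ω), (Y ω, U ω + X ω))) (u, ((z,s1),(y,s2)))
      = if s1 = s2 then pdist μ (fun ω => (X ω, Z ω, Y ω)) (s1 - u, z, y) / n else 0 := by
    intro u z s1 y s2
    rw [pdist_comp μ (fun ω => (U ω, (X ω, Y ω, Z ω))) _
        (fun w => (w.1, ((w.2.2.2, w.1 + w.2.1), (w.2.2.1, w.1 + w.2.1)))) (fun ω => rfl)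
        (u, ((z,s1),(y,s2))), m4]
    simp only [Fintype.sum_prod_type, hq]
    simp [Prod.ext_iff, ite_and, Finset.sum_ite_eq, Finset.sum_ite_eq', sum_sum_ite_eq,
      Finset.sum_div]
    by_cases hs : s1 = s2
    · subst hs
      rw [if_pos rfl]
      simp only [show ∀ x : G, (u + x = s1) = (x = s1 - u) from
        fun x => propext eq_sub_iff_add_eq'.symm]
      simp [Finset.sum_ite_eq']
    · rw [if_neg hs]
      refine Finset.sum_eq_zero fun x _ => ?_
      split_ifs with h1 h2
      · exact absurd (h1.symm.trans h2) hs
      · rfl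
      · rfl
  -- Entropy computations
  have E1 : ent2 (pdist μ (fun ω => (U ω, (Y ω, U ω + X ω))))
      = ent2 (pdist μ (fun ω => (X ω, Y ω))) + Real.logb 2 (Fintype.card G) := by
    have inj1 : Function.Injective
        (fun w : (G × β) × G => ((w.2, (w.1.2, w.2 + w.1.1)) : G × β × G)) := by
      rintro ⟨⟨x1,y1⟩,u1⟩ ⟨⟨x2,y2⟩,u2⟩ h
      simp only [Prod.mk.injEq] at h
      obtain ⟨hu, hy, hx⟩ := h
      subst hu
      simp only [Prod.mk.injEq]
      exact ⟨⟨add_left_cancel hx, hy⟩, trivial⟩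
    rw [ent2_reindex (fun w : (G × β) × G => pdist μ (fun ω => (X ω, Y ω)) w.1 / n)
      (pdist μ (fun ω => (U ω, (Y ω, U ω + X ω))))
      (fun w => (w.2, (w.1.2, w.2 + w.1.1))) inj1
      (fun w => by rw [key1]; simp)
      (fun a' ha' => by
        obtain ⟨u, y, s⟩ := a'
        exact absurd (by simp) (ha' ((s - u, y), u)))]
    exact ent2_scale _ (pdist_sum h1 _)
  have E2 : ent2 (pdist μ (fun ω => ((Z ω, U ω + X ω), (Y ω, U ω + X ω))))
      = ent2 (pdist μ (fun ω => (Z ω, Y ω))) + Real.logb 2 (Fintype.card G) := by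
    have inj2 : Function.Injective
        (fun w : (γ × β) × G => (((w.1.1, w.2), (w.1.2, w.2)) : (γ × G) × (β × G))) := by
      rintro ⟨⟨z1,y1⟩,s1⟩ ⟨⟨z2,y2⟩,s2⟩ h
      simp only [Prod.mk.injEq] at h
      obtain ⟨⟨hz, hs⟩, hy, -⟩ := h
      simp only [Prod.mk.injEq]
      exact ⟨⟨hz, hy⟩, hs⟩
    rw [ent2_reindex (fun w : (γ × β) × G => pdist μ (fun ω => (Z ω, Y ω)) w.1 / n)
      (pdist μ (fun ω => ((Z ω, U ω + X ω), (Y ω, U ω + X ω))))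
      (fun w => ((w.1.1, w.2), (w.1.2, w.2))) inj2
      (fun w => by rw [key2]; simp)
      (fun a' ha' => by
        obtain ⟨⟨z, s1⟩, y, s2⟩ := a'
        by_cases hs : s1 = s2
        · subst hs
          exact absurd rfl (ha' ((z, y), s1))
        · rw [key2, if_neg hs])]
    exact ent2_scale _ (pdist_sum h1 _)
  have E3 : ent2 (pdist μ (fun ω => (U ω, (Z ω, U ω + X ω), (Y ω, U ω + X ω))))
      = ent2 (pdist μ (fun ω => (X ω, Z ω, Y ω))) + Real.logb 2 (Fintype.card G) := by
    have inj3 : Function.Injective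
        (fun w : (G × γ × β) × G =>
          ((w.2, (w.1.2.1, w.2 + w.1.1), (w.1.2.2, w.2 + w.1.1)) : G × (γ × G) × (β × G))) := by
      rintro ⟨⟨x1,z1,y1⟩,u1⟩ ⟨⟨x2,z2,y2⟩,u2⟩ h
      simp only [Prod.mk.injEq] at h
      obtain ⟨hu, ⟨hz, hs⟩, hy, -⟩ := h
      subst hu
      simp only [Prod.mk.injEq]
      exact ⟨⟨add_left_cancel hs, hz, hy⟩, trivial⟩
    rw [ent2_reindex (fun w : (G × γ × β) × G => pdist μ (fun ω => (X ω, Z ω, Y ω)) w.1 / n)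
      (pdist μ (fun ω => (U ω, (Z ω, U ω + X ω), (Y ω, U ω + X ω))))
      (fun w => (w.2, (w.1.2.1, w.2 + w.1.1), (w.1.2.2, w.2 + w.1.1))) inj3
      (fun w => by rw [key3, if_pos rfl]; simp)
      (fun a' ha' => by
        obtain ⟨u, ⟨z, s1⟩, y, s2⟩ := a'
        by_cases hs : s1 = s2
        · subst hs
          exact absurd (by simp) (ha' ((s1 - u, z, y), u))
        · rw [key3, if_neg hs])]
    exact ent2_scale _ (pdist_sum h1 _)
  have E4 : ent2 (pdist μ (fun ω => (Y ω, U ω + X ω)))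
      = ent2 (pdist μ Y) + Real.logb 2 (Fintype.card G) := by
    rw [ent2_reindex (fun w : β × G => pdist μ Y w.1 / n)
      (pdist μ (fun ω => (Y ω, U ω + X ω)))
      (fun w => (w.1, w.2)) (fun a b h => by simpa using h)
      (fun w => key4 w.1 w.2)
      (fun a' ha' => absurd rfl (ha' (a'.1, a'.2)))]
    exact ent2_scale _ (pdist_sum h1 _)
  rw [E1, E2, E3, E4]
  linarith [hMarkov]
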